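/- First integrals of Chaplygin's marble: let B be a symmetric 3×3 real matrix and κ ∈ ℝ. Let L, γ, Ω : ℝ → ℝ³ with Ω and γ differentiable, satisfying for all t the algebraic relation L(t) = BΩ(t) − κ⟨γ(t), Ω(t)⟩γ(t) and the differential equations L̇(t) = L(t) × Ω(t) and γ̇(t) = γ(t) × Ω(t). Then the four quantities ⟨γ, γ⟩, ⟨L, γ⟩, ⟨L, L⟩, and the energy ⟨Ω, L⟩ are all constant in t. -/

import Mathlib

open Matrix

/-- Euclidean inner product on ℝ³. -/
def dot3 (u v : Fin 3 → ℝ) : ℝ := u 0 * v 0 + u 1 * v 1 + u 2 * v 2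

/-- Cross product on ℝ³. -/
def cross3 (u v : Fin 3 → ℝ) : Fin 3 → ℝ :=
  ![u 1 * v 2 - u 2 * v 1, u 2 * v 0 - u 0 * v 2, u 0 * v 1 - u 1 * v 0]

private lemma hasDerivAt_dot3 {f g : ℝ → Fin 3 → ℝ} {f' g' : Fin 3 → ℝ} {t : ℝ}
    (hf : HasDerivAt f f' t) (hg : HasDerivAt g g' t) :
    HasDerivAt (fun s => dot3 (f s) (g s)) (dot3 f' (g t) + dot3 (f t) g') t := by
  have hf0 := hasDerivAt_pi.1 hf 0
  have hf1 := hasDerivAt_pi.1 hf 1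
  have hf2 := hasDerivAt_pi.1 hf 2
  have hg0 := hasDerivAt_pi.1 hg 0
  have hg1 := hasDerivAt_pi.1 hg 1
  have hg2 := hasDerivAt_pi.1 hg 2
  have := ((hf0.mul hg0).add (hf1.mul hg1)).add (hf2.mul hg2)
  simp only [dot3]
  exact this.congr_deriv (by ring)

private lemma const_of_hasDerivAt_zero {f : ℝ → ℝ}
    (h : ∀ t, HasDerivAt f 0 t) : ∀ s t, f s = f t := by
  have hdiff : Differentiable ℝ f := fun t => (h t).differentiableAt
  exact is_const_of_deriv_eq_zero hdiff (fun t => (h t).deriv)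

/-- **First integrals of Chaplygin's marble.**  Let `B` be symmetric, `κ ∈ ℝ`, and
suppose `L(t) = BΩ(t) − κ⟨γ(t),Ω(t)⟩γ(t)` with `Ω`, `γ` differentiable and
`L̇ = L × Ω`, `γ̇ = γ × Ω`.  Then `⟨γ,γ⟩`, `⟨L,γ⟩`, `⟨L,L⟩` and the energy `⟨Ω,L⟩`
are all constant in `t`. -/
theorem marble_first_integrals
    (B : Matrix (Fin 3) (Fin 3) ℝ) (hsym : Bᵀ = B) (κ : ℝ)
    (L γ Ω : ℝ → Fin 3 → ℝ)
    (hΩdiff : Differentiable ℝ Ω)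
    (hrel : ∀ t, L t = B.mulVec (Ω t) - (κ * dot3 (γ t) (Ω t)) • γ t)
    (hL : ∀ t, HasDerivAt L (cross3 (L t) (Ω t)) t)
    (hγ : ∀ t, HasDerivAt γ (cross3 (γ t) (Ω t)) t) :
    (∀ s t, dot3 (γ s) (γ s) = dot3 (γ t) (γ t)) ∧
    (∀ s t, dot3 (L s) (γ s) = dot3 (L t) (γ t)) ∧
    (∀ s t, dot3 (L s) (L s) = dot3 (L t) (L t)) ∧
    (∀ s t, dot3 (Ω s) (L s) = dot3 (Ω t) (L t)) := by
  -- symmetry facts componentwise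
  have hb01 : B 0 1 = B 1 0 := by
    have := congrFun (congrFun hsym 1) 0; simpa using this
  have hb02 : B 0 2 = B 2 0 := by
    have := congrFun (congrFun hsym 2) 0; simpa using this
  have hb12 : B 1 2 = B 2 1 := by
    have := congrFun (congrFun hsym 2) 1; simpa using this
  set Ω' : ℝ → Fin 3 → ℝ := fun t => deriv Ω t with hΩ'def
  have hΩ : ∀ t, HasDerivAt Ω (Ω' t) t := fun t => (hΩdiff t).hasDerivAt
  -- derivative of B.mulVec ∘ Ω
  have hBΩ : ∀ t, HasDerivAt (fun s => B.mulVec (Ω s)) (B.mulVec (Ω' t)) t := by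
    intro t
    have := (LinearMap.toContinuousLinearMap
      (B.mulVecLin)).hasFDerivAt.comp_hasDerivAt t (hΩ t)
    simpa [Function.comp_def] using this
  -- derivative of the coefficient κ⟨γ,Ω⟩
  have hc : ∀ t, HasDerivAt (fun s => κ * dot3 (γ s) (Ω s))
      (κ * (dot3 (cross3 (γ t) (Ω t)) (Ω t) + dot3 (γ t) (Ω' t))) t :=
    fun t => (hasDerivAt_dot3 (hγ t) (hΩ t)).const_mul κ
  -- derivative of the RHS of the momentum relation
  have hRHS : ∀ t, HasDerivAt L
      (B.mulVec (Ω' t) -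
        ((κ * dot3 (γ t) (Ω t)) • cross3 (γ t) (Ω t) +
         (κ * (dot3 (cross3 (γ t) (Ω t)) (Ω t) + dot3 (γ t) (Ω' t))) • γ t)) t := by
    intro t
    have h := (hBΩ t).sub ((hc t).smul (hγ t))
    have hfun : (fun s => B.mulVec (Ω s) - (κ * dot3 (γ s) (Ω s)) • γ s) = L :=
      funext fun s => (hrel s).symm
    rw [← hfun]; exact h
  -- uniqueness of derivatives
  have hD : ∀ t, B.mulVec (Ω' t) -
        ((κ * dot3 (γ t) (Ω t)) • cross3 (γ t) (Ω t) +
         (κ * (dot3 (cross3 (γ t) (Ω t)) (Ω t) + dot3 (γ t) (Ω' t))) • γ t)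
      = cross3 (L t) (Ω t) := fun t => (hRHS t).unique (hL t)
  refine ⟨?_, ?_, ?_, ?_⟩
  · refine const_of_hasDerivAt_zero (fun t => ?_)
    have h := hasDerivAt_dot3 (hγ t) (hγ t)
    convert h using 1
    simp [dot3, cross3]; ring
  · refine const_of_hasDerivAt_zero (fun t => ?_)
    have h := hasDerivAt_dot3 (hL t) (hγ t)
    convert h using 1
    simp [dot3, cross3]; ring
  · refine const_of_hasDerivAt_zero (fun t => ?_)
    have h := hasDerivAt_dot3 (hL t) (hL t)
    convert h using 1
    simp [dot3, cross3]; ring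
  · refine const_of_hasDerivAt_zero (fun t => ?_)
    have h := hasDerivAt_dot3 (hΩ t) (hL t)
    convert h using 1
    have hd := hD t
    have hd0 := congrFun hd 0
    have hd1 := congrFun hd 1
    have hd2 := congrFun hd 2
    have hlt := hrel t
    have hl0 := congrFun hlt 0
    have hl1 := congrFun hlt 1
    have hl2 := congrFun hlt 2
    simp [dot3, cross3, Matrix.mulVec, dotProduct, Fin.sum_univ_three,
      Pi.sub_apply, Pi.smul_apply, smul_eq_mul, Matrix.vecHead, Matrix.vecTail] at hd0 hd1 hd2 hl0 hl1 hl2 ⊢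
    linear_combination (-(Ω t 0)) * hd0 - (Ω t 1) * hd1 - (Ω t 2) * hd2
      - (Ω' t 0) * hl0 - (Ω' t 1) * hl1 - (Ω' t 2) * hl2
      + (Ω' t 1 * Ω t 0 - Ω' t 0 * Ω t 1) * hb01
      + (Ω' t 2 * Ω t 0 - Ω' t 0 * Ω t 2) * hb02
      + (Ω' t 2 * Ω t 1 - Ω' t 1 * Ω t 2) * hb12
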